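/- arXiv:math/9509226 — 2 statements merged into one kernel-verified Lean document; each statement's English description precedes it below -/
import Mathlib

section
/- If P is a partial order satisfying the Knaster condition and Q is a partial order satisfying the c.c.c., then the product P × Q satisfies the c.c.c. -/
/-- Two conditions are compatible if they have a common upper bound. -/
def Compat {P : Type} [PartialOrder P] (p q : P) : Prop := ∃ r, p ≤ r ∧ q ≤ r

/-- The Knaster condition. -/
def Knaster (P : Type) [PartialOrder P] : Prop :=
  ∀ p : (Cardinal.aleph.{0} 1).ord.ToType → P,
    ∃ A : Set (Cardinal.aleph.{0} 1).ord.ToType, ¬ A.Countable ∧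
      ∀ i ∈ A, ∀ j ∈ A, Compat (p i) (p j)

/-- The countable chain condition: every antichain is countable. -/
def CCC (P : Type) [PartialOrder P] : Prop :=
  ∀ A : Set P, (∀ p ∈ A, ∀ q ∈ A, p ≠ q → ¬ Compat p q) → A.Countable

/-- If `P` is Knaster and `Q` is c.c.c. then `P × Q` is c.c.c. -/
theorem stmt4 (P Q : Type) [PartialOrder P] [PartialOrder Q]
    (hP : Knaster P) (hQ : CCC Q) : CCC (P × Q) := by
  intro A hA
  by_contra hunc
  -- ℵ₁ ≤ #A, so there is an injection from ω₁ into A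
  have h1 : Cardinal.aleph 1 ≤ Cardinal.mk A := by
    have := (Cardinal.countable_iff_lt_aleph_one A).not.mp hunc
    exact not_lt.mp this
  have h2 : Cardinal.mk ((Cardinal.aleph.{0} 1).ord.ToType) ≤ Cardinal.mk A := by
    rwa [Cardinal.mk_ord_toType]
  obtain ⟨f⟩ := Cardinal.le_def _ _ |>.mp h2
  -- apply the Knaster condition to the first coordinates
  obtain ⟨S, hSunc, hScompat⟩ := hP (fun i => ((f i) : P × Q).1)
  -- second coordinates of distinct elements of S are incompatible
  have key : ∀ i ∈ S, ∀ j ∈ S, i ≠ j → ¬ Compat ((f i) : P × Q).2 ((f j) : P × Q).2 := by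
    intro i hi j hj hij ⟨s, hs1, hs2⟩
    obtain ⟨r, hr1, hr2⟩ := hScompat i hi j hj
    have hfij : ((f i) : P × Q) ≠ ((f j) : P × Q) := by
      intro h
      exact hij (f.injective (Subtype.ext h))
    exact hA (f i) (f i).2 (f j) (f j).2 hfij ⟨(r, s), ⟨hr1, hs1⟩, ⟨hr2, hs2⟩⟩
  -- hence i ↦ (f i).2 is injective on S
  have hinj : Set.InjOn (fun i => ((f i) : P × Q).2) S := by
    intro i hi j hj h
    by_contra hij
    exact key i hi j hj hij ⟨((f i) : P × Q).2, le_refl _, le_of_eq h.symm⟩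
  -- the image is an antichain in Q
  have himg : ((fun i => ((f i) : P × Q).2) '' S).Countable := by
    apply hQ
    rintro q1 ⟨i, hi, rfl⟩ q2 ⟨j, hj, rfl⟩ hne
    exact key i hi j hj (fun h => hne (by rw [h]))
  exact hSunc (Set.countable_of_injective_of_countable_image hinj himg)
end

section
/- Suppose B₁ is a Boolean algebra satisfying the c.c.c. and B₂ is a Boolean algebra with the property: for every family ⟨x_i : i < λ⟩ of nonzero elements of B₂ there is Z ⊆ λ with |Z| = ℵ₁ such that {x_i : i ∈ Z} generates a proper filter (no finite meet is 0). Then the product Boolean algebra B₁ × B₂ satisfies the λ-c.c. -/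
/-- If `B₁` is a c.c.c. Boolean algebra and `B₂` is a Boolean algebra in which
every `λ`-indexed family of nonzero elements has a subfamily of size `ℵ₁`
generating a proper filter, then the product `B₁ × B₂` satisfies the `λ`-c.c. -/
theorem stmt11 (lam : Cardinal) (hlam : Cardinal.aleph0 < lam)
    (B₁ B₂ : Type) [BooleanAlgebra B₁] [BooleanAlgebra B₂]
    (h1 : ∀ A : Set B₁, (∀ x ∈ A, x ≠ ⊥) →
      (∀ x ∈ A, ∀ y ∈ A, x ≠ y → x ⊓ y = ⊥) → A.Countable)
    (h2 : ∀ x : lam.ord.ToType → B₂, (∀ i, x i ≠ ⊥) →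
      ∃ Z : Set lam.ord.ToType, Cardinal.mk Z = Cardinal.aleph 1 ∧
        ∀ t : Finset lam.ord.ToType, ↑t ⊆ Z → t.inf x ≠ ⊥) :
    ∀ A : Set (B₁ × B₂), (∀ p ∈ A, p ≠ ⊥) →
      (∀ p ∈ A, ∀ q ∈ A, p ≠ q → p ⊓ q = ⊥) → Cardinal.mk A < lam := by
  classical
  intro A hA hdisj
  by_contra hcon
  push_neg at hcon
  -- get an injection from lam.ord.toType into A
  rw [← Cardinal.mk_ord_toType lam, Cardinal.le_def] at hcon
  obtain ⟨f⟩ := hcon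
  set I := lam.ord.ToType
  -- components
  set a : I → B₁ := fun i => (f i : B₁ × B₂).1 with ha
  set b : I → B₂ := fun i => (f i : B₁ × B₂).2 with hb
  have hmem : ∀ i, (f i : B₁ × B₂) ∈ A := fun i => (f i).2
  have hne0 : ∀ i, (f i : B₁ × B₂) ≠ ⊥ := fun i => hA _ (hmem i)
  have hpair : ∀ i j : I, i ≠ j → a i ⊓ a j = ⊥ ∧ b i ⊓ b j = ⊥ := by
    intro i j hij
    have hfij : (f i : B₁ × B₂) ≠ (f j : B₁ × B₂) := by
      intro h
      exact hij (f.injective (Subtype.ext h))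
    have := hdisj _ (hmem i) _ (hmem j) hfij
    exact ⟨congrArg Prod.fst this, congrArg Prod.snd this⟩
  -- T : indices whose second coordinate is ⊥
  set T : Set I := {i | b i = ⊥} with hT
  have haT : ∀ i ∈ T, a i ≠ ⊥ := by
    intro i hi h
    exact hne0 i (Prod.ext h hi)
  have hainj : ∀ i ∈ T, ∀ j ∈ T, a i = a j → i = j := by
    intro i hi j hj h
    by_contra hij
    have := (hpair i j hij).1
    rw [h, inf_idem] at this
    exact haT j hj this
  have hTcount : T.Countable := by
    have hcnt : (a '' T).Countable := by
      apply h1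
      · rintro x ⟨i, hi, rfl⟩; exact haT i hi
      · rintro x ⟨i, hi, rfl⟩ y ⟨j, hj, rfl⟩ hxy
        exact (hpair i j (fun h => hxy (by rw [h]))).1
    exact Set.countable_of_injective_of_countable_image
      (fun i hi j hj h => hainj i hi j hj h) hcnt
  -- hence Tᶜ has size ≥ lam
  have hmkI : Cardinal.mk I = lam := Cardinal.mk_ord_toType lam
  have hTc : lam ≤ Cardinal.mk ↥Tᶜ := by
    have hsum : Cardinal.mk ↥T + Cardinal.mk ↥Tᶜ = lam := by
      rw [Cardinal.mk_sum_compl, hmkI]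
    have hTle : Cardinal.mk ↥T ≤ Cardinal.aleph0 := Cardinal.mk_le_aleph0_iff.mpr (Set.countable_coe_iff.mpr hTcount)
    by_contra hlt
    push_neg at hlt
    have : lam ≤ Cardinal.aleph0 + Cardinal.mk ↥Tᶜ := by
      rw [← hsum]; exact add_le_add_left hTle _
    have h2' : Cardinal.aleph0 + Cardinal.mk ↥Tᶜ < lam := by
      rcases le_total (Cardinal.mk ↥Tᶜ) Cardinal.aleph0 with h | h
      · calc Cardinal.aleph0 + Cardinal.mk ↥Tᶜ ≤ Cardinal.aleph0 + Cardinal.aleph0 :=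
              add_le_add_right h _
          _ = Cardinal.aleph0 := by simp
          _ < lam := hlam
      · calc Cardinal.aleph0 + Cardinal.mk ↥Tᶜ ≤ Cardinal.mk ↥Tᶜ + Cardinal.mk ↥Tᶜ :=
              add_le_add_left h _
          _ = Cardinal.mk ↥Tᶜ := by
              exact Cardinal.add_eq_self h
          _ < lam := hlt
    exact absurd this (not_le.mpr h2')
  -- injection from I into Tᶜ
  rw [← hmkI, Cardinal.le_def] at hTc
  obtain ⟨e⟩ := hTc
  set x : I → B₂ := fun i => b (e i : I) with hx
  have hx0 : ∀ i, x i ≠ ⊥ := by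
    intro i h
    exact (e i).2 h
  obtain ⟨Z, hZcard, hZ⟩ := h2 x hx0
  have hZnt : Nontrivial ↥Z := by
    rw [← Cardinal.one_lt_iff_nontrivial, hZcard]
    calc (1 : Cardinal) < Cardinal.aleph0 := Cardinal.one_lt_aleph0
      _ ≤ Cardinal.aleph 1 := Cardinal.aleph0_le_aleph 1
  obtain ⟨⟨i, hi⟩, ⟨j, hj⟩, hij⟩ := hZnt
  have hij' : i ≠ j := fun h => hij (Subtype.ext h)
  have heij : (e i : I) ≠ (e j : I) := fun h => hij' (e.injective (Subtype.ext h))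
  have hmeet : x i ⊓ x j = ⊥ := (hpair _ _ heij).2
  have : ({i, j} : Finset I).inf x ≠ ⊥ := by
    apply hZ
    intro k hk
    simp only [Finset.coe_insert, Finset.coe_singleton, Set.mem_insert_iff,
      Set.mem_singleton_iff] at hk
    rcases hk with rfl | rfl
    · exact hi
    · exact hj
  apply this
  rw [Finset.inf_insert, Finset.inf_singleton, hmeet]
end
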